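/- The polar dual of the pyramid P satisfies P* = conv{(0,0,−1),(−2,0,1),(0,−2,1),(2,−2,1),(2,2,1),(−2,2,1)}; in particular P* is the convex hull of finitely many lattice points, i.e. P is a reflexive polytope. -/

import Mathlib

/-- The polar dual of a subset `Q ⊆ ℝⁿ`:
`Q* = {y : ⟨x, y⟩ ≥ −1 for all x ∈ Q}`, with the standard dot product. -/
def polarDual {n : ℕ} (Q : Set (Fin n → ℝ)) : Set (Fin n → ℝ) :=
  {y | ∀ x ∈ Q, -1 ≤ ∑ i, x i * y i}

/-- The pyramid `P = conv{(1,0,1),(1,1,1),(0,1,1),(−1,0,1),(0,−1,1),(0,0,−1)}`,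
associated to the projective cone over the anticanonically embedded `dP₇`. -/
noncomputable def P : Set (Fin 3 → ℝ) :=
  convexHull ℝ
    ({![1, 0, 1], ![1, 1, 1], ![0, 1, 1], ![-1, 0, 1], ![0, -1, 1], ![0, 0, -1]} :
      Set (Fin 3 → ℝ))

/-- Auxiliary: a convex combination of four points of a set lies in its convex hull. -/
lemma comb4_mem {s : Set (Fin 3 → ℝ)} {p q r t : Fin 3 → ℝ}
    (hp : p ∈ s) (hq : q ∈ s) (hr : r ∈ s) (ht : t ∈ s)
    {a b c d : ℝ} (ha : 0 ≤ a) (hb : 0 ≤ b) (hc : 0 ≤ c) (hd : 0 ≤ d)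
    (hsum : a + b + c + d = 1) :
    a • p + b • q + c • r + d • t ∈ convexHull ℝ s := by
  have := Convex.sum_mem (t := (Finset.univ : Finset (Fin 4)))
    (w := ![a, b, c, d]) (z := ![p, q, r, t]) (convex_convexHull ℝ s)
    (by intro i _; fin_cases i <;> assumption)
    (by simp [Fin.sum_univ_four]; linarith)
    (by intro i _; fin_cases i <;> simpa using subset_convexHull ℝ s (by assumption))
  simpa [Fin.sum_univ_four] using this

/-- Auxiliary: to be in the polar dual of a convex hull it suffices to check generators. -/
lemma mem_polarDual_convexHull {n : ℕ} {S : Set (Fin n → ℝ)} {y : Fin n → ℝ}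
    (h : ∀ x ∈ S, -1 ≤ ∑ i, x i * y i) : y ∈ polarDual (convexHull ℝ S) := by
  intro x hx
  have hlin : IsLinearMap ℝ (fun x : Fin n → ℝ => ∑ i, x i * y i) := by
    constructor
    · intro u v; simp [add_mul, Finset.sum_add_distrib]
    · intro c u; simp [Finset.mul_sum, mul_assoc]
  exact convexHull_min h (convex_halfSpace_ge hlin (-1)) hx

/-- The polar dual of the pyramid `P` is
`conv{(0,0,−1),(−2,0,1),(0,−2,1),(2,−2,1),(2,2,1),(−2,2,1)}`;
in particular `P` is a reflexive polytope. -/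
theorem polarDual_pyramid :
    polarDual P =
      convexHull ℝ
        ({![0, 0, -1], ![-2, 0, 1], ![0, -2, 1], ![2, -2, 1], ![2, 2, 1], ![-2, 2, 1]} :
          Set (Fin 3 → ℝ)) := by
  -- names for the generating set of the dual
  set S : Set (Fin 3 → ℝ) :=
    ({![0, 0, -1], ![-2, 0, 1], ![0, -2, 1], ![2, -2, 1], ![2, 2, 1], ![-2, 2, 1]} :
      Set (Fin 3 → ℝ)) with hS
  have hA : (![0, 0, -1] : Fin 3 → ℝ) ∈ S := Set.mem_insert _ _
  have hB : (![-2, 0, 1] : Fin 3 → ℝ) ∈ S :=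
    Set.mem_insert_of_mem _ (Set.mem_insert _ _)
  have hC : (![0, -2, 1] : Fin 3 → ℝ) ∈ S :=
    Set.mem_insert_of_mem _ (Set.mem_insert_of_mem _ (Set.mem_insert _ _))
  have hD : (![2, -2, 1] : Fin 3 → ℝ) ∈ S :=
    Set.mem_insert_of_mem _ (Set.mem_insert_of_mem _ (Set.mem_insert_of_mem _
      (Set.mem_insert _ _)))
  have hE : (![2, 2, 1] : Fin 3 → ℝ) ∈ S :=
    Set.mem_insert_of_mem _ (Set.mem_insert_of_mem _ (Set.mem_insert_of_mem _
      (Set.mem_insert_of_mem _ (Set.mem_insert _ _))))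
  have hF : (![-2, 2, 1] : Fin 3 → ℝ) ∈ S :=
    Set.mem_insert_of_mem _ (Set.mem_insert_of_mem _ (Set.mem_insert_of_mem _
      (Set.mem_insert_of_mem _ (Set.mem_insert_of_mem _ rfl))))
  -- vertices of P
  have pv1 : (![1, 0, 1] : Fin 3 → ℝ) ∈ P := subset_convexHull ℝ _ (Set.mem_insert _ _)
  have pv2 : (![1, 1, 1] : Fin 3 → ℝ) ∈ P := subset_convexHull ℝ _
    (Set.mem_insert_of_mem _ (Set.mem_insert _ _))
  have pv3 : (![0, 1, 1] : Fin 3 → ℝ) ∈ P := subset_convexHull ℝ _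
    (Set.mem_insert_of_mem _ (Set.mem_insert_of_mem _ (Set.mem_insert _ _)))
  have pv4 : (![-1, 0, 1] : Fin 3 → ℝ) ∈ P := subset_convexHull ℝ _
    (Set.mem_insert_of_mem _ (Set.mem_insert_of_mem _ (Set.mem_insert_of_mem _
      (Set.mem_insert _ _))))
  have pv5 : (![0, -1, 1] : Fin 3 → ℝ) ∈ P := subset_convexHull ℝ _
    (Set.mem_insert_of_mem _ (Set.mem_insert_of_mem _ (Set.mem_insert_of_mem _
      (Set.mem_insert_of_mem _ (Set.mem_insert _ _)))))
  have pv6 : (![0, 0, -1] : Fin 3 → ℝ) ∈ P := subset_convexHull ℝ _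
    (Set.mem_insert_of_mem _ (Set.mem_insert_of_mem _ (Set.mem_insert_of_mem _
      (Set.mem_insert_of_mem _ (Set.mem_insert_of_mem _ rfl)))))
  ext y
  constructor
  · -- ⊆ : from the six inequalities, build an explicit convex combination
    intro hy
    have h1 : -1 ≤ y 0 + y 2 := by simpa [Fin.sum_univ_three] using hy _ pv1
    have h2 : -1 ≤ y 0 + y 1 + y 2 := by
      have := hy _ pv2; simp [Fin.sum_univ_three] at this; linarith
    have h3 : -1 ≤ y 1 + y 2 := by simpa [Fin.sum_univ_three] using hy _ pv3
    have h4 : -1 ≤ -y 0 + y 2 := by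
      have := hy _ pv4; simp [Fin.sum_univ_three] at this; linarith
    have h5 : -1 ≤ -y 1 + y 2 := by
      have := hy _ pv5; simp [Fin.sum_univ_three] at this; linarith
    have h6 : y 2 ≤ 1 := by
      have := hy _ pv6; simp [Fin.sum_univ_three] at this; linarith
    set a := y 0 with hay
    set b := y 1 with hby
    set c := y 2 with hcy
    by_cases k1 : 1 ≤ 2 * a - b - c
    · -- triangle C D E plus apex A
      have key := comb4_mem hA hC hD hE
        (a := (1 - c) / 2) (b := (1 + c - a) / 2) (c := (2 * a - b - c - 1) / 4)
        (d := (1 + c + b) / 4)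
        (by linarith) (by linarith) (by linarith) (by linarith) (by ring)
      have hyeq : y = ((1 - c) / 2) • (![0, 0, -1] : Fin 3 → ℝ) +
          ((1 + c - a) / 2) • ![0, -2, 1] + ((2 * a - b - c - 1) / 4) • ![2, -2, 1] +
          ((1 + c + b) / 4) • ![2, 2, 1] := by
        funext i; fin_cases i <;> simp <;> ring
      rw [hyeq]; exact key
    · by_cases k2 : 1 ≤ 2 * b - a - c
      · -- triangle B F E plus apex A
        have key := comb4_mem hA hB hF hE
          (a := (1 - c) / 2) (b := (1 + c - b) / 2) (c := (2 * b - a - c - 1) / 4)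
          (d := (1 + c + a) / 4)
          (by linarith) (by linarith) (by linarith) (by linarith) (by ring)
        have hyeq : y = ((1 - c) / 2) • (![0, 0, -1] : Fin 3 → ℝ) +
            ((1 + c - b) / 2) • ![-2, 0, 1] + ((2 * b - a - c - 1) / 4) • ![-2, 2, 1] +
            ((1 + c + a) / 4) • ![2, 2, 1] := by
          funext i; fin_cases i <;> simp <;> ring
        rw [hyeq]; exact key
      · -- triangle B C E plus apex A
        push_neg at k1 k2
        have key := comb4_mem hA hB hC hE
          (a := (1 - c) / 2) (b := (b - 2 * a + 1 + c) / 6) (c := (a - 2 * b + 1 + c) / 6)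
          (d := (a + b + 1 + c) / 6)
          (by linarith) (by linarith) (by linarith) (by linarith) (by ring)
        have hyeq : y = ((1 - c) / 2) • (![0, 0, -1] : Fin 3 → ℝ) +
            ((b - 2 * a + 1 + c) / 6) • ![-2, 0, 1] + ((a - 2 * b + 1 + c) / 6) • ![0, -2, 1] +
            ((a + b + 1 + c) / 6) • ![2, 2, 1] := by
          funext i; fin_cases i <;> simp <;> ring
        rw [hyeq]; exact key
  · -- ⊇ : the dual is convex and contains the six generators
    intro hy
    have hconv : Convex ℝ (polarDual P) := by
      intro u hu v hv s t hs ht hst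
      intro x hx
      have h1 := hu x hx
      have h2 := hv x hx
      have e : ∑ i, x i * (s • u + t • v) i = s * (∑ i, x i * u i) + t * (∑ i, x i * v i) := by
        simp [Fin.sum_univ_three]; ring
      rw [e]
      nlinarith [mul_le_mul_of_nonneg_left h1 hs, mul_le_mul_of_nonneg_left h2 ht]
    refine convexHull_min ?_ hconv hy
    intro v hv
    simp only [hS, Set.mem_insert_iff, Set.mem_singleton_iff] at hv
    rcases hv with rfl | rfl | rfl | rfl | rfl | rfl <;>
      · refine mem_polarDual_convexHull ?_
        intro x hx
        simp only [Set.mem_insert_iff, Set.mem_singleton_iff] at hx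
        rcases hx with rfl | rfl | rfl | rfl | rfl | rfl <;>
          norm_num [Fin.sum_univ_three, Matrix.cons_val_two, Matrix.tail_cons]
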